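/- Let a ≥ 1 be a real number, let n, t be integers with n ≥ 4a and 0 ≤ t ≤ n − a, let f: {0,1}^n → ℝ be an a-self-bounding function, and let x₀ ∈ {0,1}^n. Then the average of f over all points of {0,1}^n at Hamming distance exactly t from x₀ is at least (1 − t/(n − a + 1))^a · f(x₀); that is, (1/C(n,t)) · Σ_{x : d(x,x₀)=t} f(x) ≥ (1 − t/(n−a+1))^a · f(x₀). -/
import Mathlib

noncomputable section

open Finset

lemma card_agree {n : ℕ} (x₀ x : Fin n → Bool) :
    ({i | x i = x₀ i} : Finset (Fin n)).card = n - hammingDist x x₀ := by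
  have h := Finset.card_filter_add_card_filter_not (s := (univ : Finset (Fin n)))
    (p := fun i => x i = x₀ i)
  simp only [card_univ, Fintype.card_fin] at h
  have : hammingDist x x₀ = #(filter (fun a => ¬ x a = x₀ a) univ) := rfl
  omega

lemma hd_flip {n : ℕ} (x₀ x : Fin n → Bool) (i : Fin n) (h : x i = x₀ i) :
    hammingDist (Function.update x i (!(x i))) x₀ = hammingDist x x₀ + 1 := by
  have hset : ({j | Function.update x i (!(x i)) j ≠ x₀ j} : Finset (Fin n))
      = insert i ({j | x j ≠ x₀ j} : Finset (Fin n)) := by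
    ext j
    rcases eq_or_ne j i with rfl | hj
    · simp only [mem_filter, mem_univ, true_and, mem_insert, Function.update_self]
      constructor
      · intro _; left; trivial
      · intro _; rw [h]; cases x₀ j <;> simp
    · simp [Function.update_of_ne hj, hj]
  show ({j | Function.update x i (!(x i)) j ≠ x₀ j} : Finset (Fin n)).card = _
  rw [hset, card_insert_of_notMem (by simp [h])]
  rfl

lemma hd_unflip {n : ℕ} (x₀ y : Fin n → Bool) (i : Fin n) (h : y i ≠ x₀ i) :
    hammingDist (Function.update y i (x₀ i)) x₀ + 1 = hammingDist y x₀ := by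
  have hset : ({j | y j ≠ x₀ j} : Finset (Fin n))
      = insert i ({j | Function.update y i (x₀ i) j ≠ x₀ j} : Finset (Fin n)) := by
    ext j
    rcases eq_or_ne j i with rfl | hj
    · simp [Function.update_self, h]
    · simp [Function.update_of_ne hj, hj]
  show _ + 1 = ({j | y j ≠ x₀ j} : Finset (Fin n)).card
  rw [hset, card_insert_of_notMem (by simp [Function.update_self])]
  rfl

lemma flip_sum {n : ℕ} (x₀ : Fin n → Bool) (f : (Fin n → Bool) → ℝ) (s : ℕ) :
    ∑ x ∈ ({x | hammingDist x x₀ = s} : Finset (Fin n → Bool)),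
      ∑ i ∈ ({i | x i = x₀ i} : Finset (Fin n)), f (Function.update x i (!(x i)))
    = ∑ y ∈ ({y | hammingDist y x₀ = s + 1} : Finset (Fin n → Bool)),
      ∑ i ∈ ({i | y i ≠ x₀ i} : Finset (Fin n)), f y := by
  rw [Finset.sum_sigma', Finset.sum_sigma']
  refine Finset.sum_nbij' (fun p => ⟨Function.update p.1 p.2 (!(p.1 p.2)), p.2⟩)
    (fun q => ⟨Function.update q.1 q.2 (x₀ q.2), q.2⟩) ?_ ?_ ?_ ?_ ?_
  · rintro ⟨x, i⟩ hp
    simp only [mem_sigma, mem_filter, mem_univ, true_and] at hp ⊢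
    obtain ⟨hd, hi⟩ := hp
    refine ⟨by rw [hd_flip x₀ x i hi, hd], ?_⟩
    rw [Function.update_self, hi]
    cases x₀ i <;> simp
  · rintro ⟨y, i⟩ hq
    simp only [mem_sigma, mem_filter, mem_univ, true_and] at hq ⊢
    obtain ⟨hd, hi⟩ := hq
    refine ⟨?_, by rw [Function.update_self]⟩
    have := hd_unflip x₀ y i hi
    omega
  · rintro ⟨x, i⟩ hp
    simp only [mem_sigma, mem_filter, mem_univ, true_and] at hp
    have : x₀ i = x i := hp.2.symm
    simp [Function.update_idem, this, Function.update_eq_self]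
  · rintro ⟨y, i⟩ hq
    simp only [mem_sigma, mem_filter, mem_univ, true_and] at hq
    have hy : y i = !(x₀ i) := by
      have := hq.2; cases h1 : y i <;> cases h2 : x₀ i <;> simp_all
    simp [Function.update_idem, Function.update_self, hy, Function.update_eq_self]
  · rintro ⟨x, i⟩ _; rfl

def SelfBounding (n : ℕ) (a : ℝ) (f : (Fin n → Bool) → ℝ) : Prop :=
  ∀ x : Fin n → Bool,
    (∀ i : Fin n,
      f x - min (f (Function.update x i false)) (f (Function.update x i true)) ≤ 1) ∧
    ∑ i : Fin n,
      (f x - min (f (Function.update x i false)) (f (Function.update x i true))) ≤ a * f x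

lemma c_nonneg {n : ℕ} (f : (Fin n → Bool) → ℝ) (x : Fin n → Bool) (i : Fin n) :
    0 ≤ f x - min (f (Function.update x i false)) (f (Function.update x i true)) := by
  have : min (f (Function.update x i false)) (f (Function.update x i true)) ≤ f x := by
    cases h : x i
    · exact le_trans (min_le_left _ _) (by rw [← h, Function.update_eq_self])
    · exact le_trans (min_le_right _ _) (by rw [← h, Function.update_eq_self])
  linarith

lemma f_nonneg {n : ℕ} {a : ℝ} (ha : 1 ≤ a) {f : (Fin n → Bool) → ℝ}
    (hf : SelfBounding n a f) (x : Fin n → Bool) : 0 ≤ f x := by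
  have h2 := (hf x).2
  have h0 : (0:ℝ) ≤ ∑ i : Fin n,
      (f x - min (f (Function.update x i false)) (f (Function.update x i true))) :=
    Finset.sum_nonneg fun i _ => c_nonneg f x i
  nlinarith

lemma flip_lower {n : ℕ} {a : ℝ} {f : (Fin n → Bool) → ℝ} (hf : SelfBounding n a f)
    (x : Fin n → Bool) (i : Fin n) :
    f x - (f x - min (f (Function.update x i false)) (f (Function.update x i true)))
      ≤ f (Function.update x i (!(x i))) := by
  have : min (f (Function.update x i false)) (f (Function.update x i true))
      ≤ f (Function.update x i (!(x i))) := by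
    cases x i
    · exact min_le_right _ _
    · exact min_le_left _ _
  linarith

lemma step {n : ℕ} {a : ℝ} (ha : 1 ≤ a) {f : (Fin n → Bool) → ℝ} (hf : SelfBounding n a f)
    (x₀ : Fin n → Bool) (s : ℕ) :
    ((n:ℝ) - s - a) * ∑ x ∈ ({x | hammingDist x x₀ = s} : Finset (Fin n → Bool)), f x
      ≤ ((s:ℝ) + 1) * ∑ y ∈ ({y | hammingDist y x₀ = s + 1} : Finset (Fin n → Bool)), f y := by
  rw [Finset.mul_sum, Finset.mul_sum]
  calc ∑ x ∈ ({x | hammingDist x x₀ = s} : Finset (Fin n → Bool)), ((n:ℝ) - s - a) * f x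
      ≤ ∑ x ∈ ({x | hammingDist x x₀ = s} : Finset (Fin n → Bool)),
          ∑ i ∈ ({i | x i = x₀ i} : Finset (Fin n)), f (Function.update x i (!(x i))) := by
        refine Finset.sum_le_sum ?_
        intro x hx
        simp only [mem_filter, mem_univ, true_and] at hx
        have hsn : s ≤ n := by
          rw [← hx]
          simpa using hammingDist_le_card_fintype (x := x) (y := x₀)
        have hcard : ({i | x i = x₀ i} : Finset (Fin n)).card = n - s := by
          rw [card_agree, hx]
        have hsum : ∑ i ∈ ({i | x i = x₀ i} : Finset (Fin n)),
            (f x - min (f (Function.update x i false)) (f (Function.update x i true)))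
            ≤ a * f x := by
          refine le_trans (Finset.sum_le_sum_of_subset_of_nonneg (Finset.subset_univ _)
            (fun i _ _ => c_nonneg f x i)) (hf x).2
        calc ((n:ℝ) - s - a) * f x
            ≤ (↑(n - s) : ℝ) * f x - a * f x := by
              rw [Nat.cast_sub hsn]; ring_nf; exact le_refl _
          _ ≤ (↑(n - s) : ℝ) * f x - ∑ i ∈ ({i | x i = x₀ i} : Finset (Fin n)),
                (f x - min (f (Function.update x i false)) (f (Function.update x i true))) := by
              linarith
          _ = ∑ i ∈ ({i | x i = x₀ i} : Finset (Fin n)),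
                (f x - (f x - min (f (Function.update x i false)) (f (Function.update x i true)))) := by
              simp only [sub_sub_cancel]
              rw [Finset.sum_sub_distrib, Finset.sum_const, hcard, nsmul_eq_mul]
              ring
          _ ≤ ∑ i ∈ ({i | x i = x₀ i} : Finset (Fin n)), f (Function.update x i (!(x i))) :=
              Finset.sum_le_sum fun i _ => flip_lower hf x i
    _ = ∑ y ∈ ({y | hammingDist y x₀ = s + 1} : Finset (Fin n → Bool)),
          ∑ i ∈ ({i | y i ≠ x₀ i} : Finset (Fin n)), f y := flip_sum x₀ f s
    _ = ∑ y ∈ ({y | hammingDist y x₀ = s + 1} : Finset (Fin n → Bool)), ((s:ℝ) + 1) * f y := by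
        refine Finset.sum_congr rfl ?_
        intro y hy
        simp only [mem_filter, mem_univ, true_and] at hy
        have : ({i | y i ≠ x₀ i} : Finset (Fin n)).card = s + 1 := hy
        rw [Finset.sum_const, this, nsmul_eq_mul]
        push_cast
        ring

lemma bern {a b : ℝ} (ha : 1 ≤ a) (hb : 1 ≤ b) : (b/(b+1)) ^ a ≤ b/(b+a) := by
  have hb0 : (0:ℝ) < b := by linarith
  have h1 : 1 + a * (1/b) ≤ (1 + 1/b) ^ a :=
    one_add_mul_self_le_rpow_one_add (by nlinarith [one_div_pos.mpr hb0]) ha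
  have e1 : (1:ℝ) + 1/b = (b+1)/b := by field_simp
  have e2 : (1:ℝ) + a * (1/b) = (b+a)/b := by field_simp
  rw [e1, e2] at h1
  have hpos : (0:ℝ) < (b+a)/b := by positivity
  calc (b/(b+1)) ^ a = (((b+1)/b)⁻¹) ^ a := by rw [inv_div]
    _ = (((b+1)/b) ^ a)⁻¹ := Real.inv_rpow (by positivity) a
    _ ≤ ((b+a)/b)⁻¹ := by
        apply inv_anti₀ hpos h1
    _ = b/(b+a) := by rw [inv_div]

lemma main_ind {n : ℕ} {a : ℝ} (ha : 1 ≤ a) {f : (Fin n → Bool) → ℝ}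
    (hf : SelfBounding n a f) (x₀ : Fin n → Bool) :
    ∀ t : ℕ, (t:ℝ) ≤ (n:ℝ) - a →
      (((n:ℝ) - t - a + 1)/((n:ℝ) - a + 1)) ^ a * f x₀ ≤
        (∑ x ∈ ({x | hammingDist x x₀ = t} : Finset (Fin n → Bool)), f x) / (n.choose t : ℝ) := by
  intro t
  induction t with
  | zero =>
    intro ht
    simp only [Nat.cast_zero, sub_zero, Nat.choose_zero_right, Nat.cast_one, div_one]
    have hD : ((n:ℝ) - a + 1) ≠ 0 := by push_cast at ht; intro h; linarith
    rw [div_self hD, Real.one_rpow, one_mul]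
    have hsphere : ({x | hammingDist x x₀ = 0} : Finset (Fin n → Bool)) = {x₀} := by
      ext x
      simp [hammingDist_eq_zero]
    rw [hsphere, Finset.sum_singleton]
  | succ t IH =>
    intro ht
    push_cast at ht
    have ht' : (t:ℝ) ≤ (n:ℝ) - a := by linarith
    have IH' := IH ht'
    set b : ℝ := (n:ℝ) - t - a with hbdef
    have hb1 : (1:ℝ) ≤ b := by simp only [hbdef]; linarith
    have hb0 : (0:ℝ) < b := by linarith
    have hD : (0:ℝ) < (n:ℝ) - a + 1 := by linarith
    have hNt : (0:ℝ) < (n:ℝ) - t := by linarith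
    have htn : t + 1 ≤ n := by
      have : (t:ℝ) + 1 + 1 ≤ (n:ℝ) := by linarith
      exact_mod_cast by exact_mod_cast Nat.le_of_lt_succ (by exact_mod_cast (by push_cast; linarith : ((t+1:ℕ):ℝ) < (n:ℝ)+1))
    have htn' : t ≤ n := Nat.le_of_succ_le htn
    have hc1 : (0:ℝ) < (n.choose t : ℝ) := by exact_mod_cast Nat.choose_pos htn'
    have hc2 : (0:ℝ) < (n.choose (t+1) : ℝ) := by exact_mod_cast Nat.choose_pos htn
    have hcc : (n.choose (t+1) : ℝ) * ((t:ℝ)+1) = (n.choose t : ℝ) * ((n:ℝ) - t) := by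
      have h := Nat.choose_succ_right_eq n t
      have : ((n.choose (t+1) * (t+1) : ℕ) : ℝ) = ((n.choose t * (n - t) : ℕ) : ℝ) :=
        congrArg (Nat.cast : ℕ → ℝ) h
      push_cast [Nat.cast_sub htn'] at this
      linarith
    set St : ℝ := ∑ x ∈ ({x | hammingDist x x₀ = t} : Finset (Fin n → Bool)), f x
    set St1 : ℝ := ∑ x ∈ ({x | hammingDist x x₀ = t + 1} : Finset (Fin n → Bool)), f x
    have hstep : b * St ≤ ((t:ℝ) + 1) * St1 := step ha hf x₀ t
    have hfx : 0 ≤ f x₀ := f_nonneg ha hf x₀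
    have hgoalLHS : ((n:ℝ) - (t+1) - a + 1) = b := by simp [hbdef]; ring
    have hA : (b/((n:ℝ) - a + 1)) ^ a ≤ b/(b+a) * (((b+1)/((n:ℝ) - a + 1)) ^ a) := by
      have hsplit : (b/((n:ℝ) - a + 1)) ^ a
          = (b/(b+1)) ^ a * (((b+1)/((n:ℝ) - a + 1)) ^ a) := by
        rw [← Real.mul_rpow (by positivity) (by positivity)]
        congr 1
        field_simp
      rw [hsplit]
      exact mul_le_mul_of_nonneg_right (bern ha hb1) (Real.rpow_nonneg (by positivity) a)
    have hb1D : b + 1 = (n:ℝ) - t - a + 1 := by rw [hbdef]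
    have hba : b + a = (n:ℝ) - t := by rw [hbdef]; ring
    have hkey : b/((n:ℝ)-t) * (St/(n.choose t : ℝ)) ≤ St1/(n.choose (t+1) : ℝ) := by
      rw [div_mul_div_comm, div_le_div_iff₀ (by positivity) hc2]
      calc b * St * (n.choose (t+1) : ℝ)
          ≤ ((t:ℝ)+1) * St1 * (n.choose (t+1) : ℝ) :=
            mul_le_mul_of_nonneg_right hstep (le_of_lt hc2)
        _ = St1 * (((n:ℝ)-t) * (n.choose t : ℝ)) := by linear_combination St1 * hcc
    calc (((n:ℝ) - (t+1:ℕ) - a + 1)/((n:ℝ) - a + 1)) ^ a * f x₀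
        = (b/((n:ℝ) - a + 1)) ^ a * f x₀ := by push_cast; rw [hgoalLHS]
      _ ≤ (b/(b+a) * (((b+1)/((n:ℝ) - a + 1)) ^ a)) * f x₀ :=
          mul_le_mul_of_nonneg_right hA hfx
      _ = b/((n:ℝ)-t) * ((((n:ℝ) - t - a + 1)/((n:ℝ) - a + 1)) ^ a * f x₀) := by
          rw [hba, hb1D]; ring
      _ ≤ b/((n:ℝ)-t) * (St/(n.choose t : ℝ)) :=
          mul_le_mul_of_nonneg_left IH' (by positivity)
      _ ≤ St1/(n.choose (t+1) : ℝ) := hkey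

theorem level_average_bound (n t : ℕ) (a : ℝ) (ha : 1 ≤ a) (hn : 4 * a ≤ (n : ℝ))
    (ht : (t : ℝ) ≤ (n : ℝ) - a)
    (f : (Fin n → Bool) → ℝ) (hf : SelfBounding n a f) (x₀ : Fin n → Bool) :
    (1 - (t : ℝ) / ((n : ℝ) - a + 1)) ^ (a : ℝ) * f x₀ ≤
      (∑ x ∈ Finset.univ.filter (fun x : Fin n → Bool => hammingDist x x₀ = t), f x) /
        (n.choose t : ℝ) := by
  have hD : (0:ℝ) < (n:ℝ) - a + 1 := by linarith
  have he : 1 - (t : ℝ) / ((n : ℝ) - a + 1) = ((n:ℝ) - t - a + 1)/((n:ℝ) - a + 1) := by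
    field_simp; ring
  rw [he]
  exact main_ind ha hf x₀ t ht
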